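/- Let Z be a complex Banach space, B ∈ B(Z), and let G be a nonempty open subset of ℂ. Assume there exist a sequence {G(n)} of open subsets of ℂ and a sequence {M(n)} of closed subspaces of Z invariant under B such that closure(G(n)) ⊆ G(n+1), G = ⋃_n G(n), σ(B|M(n)) ⊆ ℂ∖G(n), and σ(B/M(n)) ⊆ closure(G(n)) for all n. Let m be a positive integer, λ ∈ G(m), and let {z*_n} be a sequence in Z* with ‖(λ−B*)z*_n‖ → 0 as n → ∞. Then there exists a sequence {z̃*_n} in the annihilator M(m)^⊥ such that ‖z*_n − z̃*_n‖ → 0 as n → ∞. -/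

import Mathlib

open NormedSpace Filter Topology Set

noncomputable section

/-- The Banach-space adjoint (dual map) of a bounded operator:
`(dualOp q) g = g ∘ q`. -/
noncomputable def dualOp {E F : Type*} [NormedAddCommGroup E] [NormedSpace ℂ E]
    [NormedAddCommGroup F] [NormedSpace ℂ F] (q : E →L[ℂ] F) :
    StrongDual ℂ F →L[ℂ] StrongDual ℂ E :=
  (ContinuousLinearMap.compL ℂ E F ℂ).flip q

/-- The restriction of an operator to an invariant subspace. -/
noncomputable def restrictOp {Z : Type*} [NormedAddCommGroup Z] [NormedSpace ℂ Z]
    (B : Z →L[ℂ] Z) (M : Submodule ℂ Z) (h : ∀ z ∈ M, B z ∈ M) : M →L[ℂ] M :=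
  (B.comp M.subtypeL).codRestrict M (fun x => h x x.2)

/-- The operator induced on the quotient space by an invariant subspace:
`quotOp B M h (z + M) = B z + M`. -/
noncomputable def quotOp {Z : Type*} [NormedAddCommGroup Z] [NormedSpace ℂ Z]
    (B : Z →L[ℂ] Z) (M : Submodule ℂ Z) (h : ∀ z ∈ M, B z ∈ M) :
    (Z ⧸ M) →L[ℂ] (Z ⧸ M) where
  __ := M.mapQ M B.toLinearMap h
  cont := by
    have h1 : (⇑(M.mapQ M B.toLinearMap h) ∘ ⇑M.mkQ) = ⇑M.mkQ ∘ ⇑B := by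
      ext z; simp [Submodule.mapQ_apply]
    exact (Submodule.isOpenQuotientMap_mkQ M).isQuotientMap.continuous_iff.mpr
      (h1 ▸ ((Submodule.isOpenQuotientMap_mkQ M).continuous.comp B.continuous))

/-- The annihilator `M^⊥` of a subspace `M ⊆ Z` in the continuous dual `Z*`. -/
def annihilator {Z : Type*} [NormedAddCommGroup Z] [NormedSpace ℂ Z]
    (M : Submodule ℂ Z) : Submodule ℂ (StrongDual ℂ Z) where
  carrier := {g : StrongDual ℂ Z | ∀ z ∈ M, g z = 0}
  add_mem' := by intro a b ha hb z hz; simp [ha z hz, hb z hz]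
  zero_mem' := by intro z hz; simp
  smul_mem' := by intro c g hg z hz; simp [hg z hz]

theorem approximate_annihilator_correction {Z : Type*}
    [NormedAddCommGroup Z] [NormedSpace ℂ Z] [CompleteSpace Z]
    (B : Z →L[ℂ] Z) (G : Set ℂ)
    (hGopen : IsOpen G) (hGne : G.Nonempty)
    (Gs : ℕ → Set ℂ) (Ms : ℕ → Submodule ℂ Z)
    (hGsopen : ∀ n, IsOpen (Gs n))
    (hMscl : ∀ n, IsClosed ((Ms n : Set Z)))
    (hMsinv : ∀ n, ∀ z ∈ Ms n, B z ∈ Ms n)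
    (hGsmono : ∀ n, closure (Gs n) ⊆ Gs (n + 1))
    (hGunion : G = ⋃ n, Gs n)
    (hres : ∀ n, spectrum ℂ (restrictOp B (Ms n) (hMsinv n)) ⊆ (Gs n)ᶜ)
    (hquo : ∀ n, spectrum ℂ (quotOp B (Ms n) (hMsinv n)) ⊆ closure (Gs n))
    (m : ℕ) (lam : ℂ) (hlam : lam ∈ Gs m)
    (zs : ℕ → StrongDual ℂ Z)
    (hzs : Tendsto (fun n => ‖lam • zs n - dualOp B (zs n)‖) atTop (𝓝 0)) :
    ∃ ws : ℕ → StrongDual ℂ Z,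
      (∀ n, ws n ∈ annihilator (Ms m)) ∧
      Tendsto (fun n => ‖zs n - ws n‖) atTop (𝓝 0) := by
  classical
  set M : Submodule ℂ Z := Ms m with hM
  haveI : CompleteSpace M := (hMscl m).completeSpace_coe
  set T : M →L[ℂ] M := restrictOp B (Ms m) (hMsinv m) with hT
  have hnot : lam ∉ spectrum ℂ T := fun h => (hres m h) hlam
  rw [spectrum.notMem_iff] at hnot
  obtain ⟨u, hu⟩ := hnot
  set R : M →L[ℂ] M := ↑u⁻¹ with hR
  have hAR : ∀ x : M, (algebraMap ℂ (M →L[ℂ] M) lam - T) (R x) = x := by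
    intro x
    have h1 : ((algebraMap ℂ (M →L[ℂ] M) lam - T) * R) x = x := by
      rw [← hu]
      have h0 : (↑u * R : M →L[ℂ] M) = 1 := by rw [hR]; exact u.mul_inv
      rw [h0]; rfl
    simpa [ContinuousLinearMap.mul_apply] using h1
  have hTcoe : ∀ y : M, ((T y : M) : Z) = B (y : Z) := by
    intro y; rfl
  have hkey : ∀ n, ∀ x : M, zs n (x : Z) =
      (lam • zs n - dualOp B (zs n)) ((R x : M) : Z) := by
    intro n x
    conv_lhs => rw [← hAR x]
    have h2 : (((algebraMap ℂ (M →L[ℂ] M) lam - T) (R x) : M) : Z)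
        = lam • ((R x : M) : Z) - B ((R x : M) : Z) := by
      simp [Algebra.algebraMap_eq_smul_one, hTcoe]
    rw [h2]
    simp [dualOp, smul_sub, smul_smul]
  choose g hg hgnorm using fun n =>
    exists_extension_norm_eq M ((zs n).comp M.subtypeL)
  refine ⟨fun n => zs n - g n, ?_, ?_⟩
  · intro n z hz
    have := hg n ⟨z, hz⟩
    simp only [ContinuousLinearMap.comp_apply, Submodule.subtypeL_apply] at this
    simp [this]
  · have hbound : ∀ n, ‖zs n - (zs n - g n)‖ ≤
        ‖R‖ * ‖lam • zs n - dualOp B (zs n)‖ := by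
      intro n
      have h3 : zs n - (zs n - g n) = g n := by abel
      rw [h3, hgnorm n]
      refine ContinuousLinearMap.opNorm_le_bound _
        (by positivity) ?_
      intro x
      simp only [ContinuousLinearMap.comp_apply, Submodule.subtypeL_apply]
      rw [hkey n x]
      calc ‖(lam • zs n - dualOp B (zs n)) ((R x : M) : Z)‖
          ≤ ‖lam • zs n - dualOp B (zs n)‖ * ‖((R x : M) : Z)‖ :=
            ContinuousLinearMap.le_opNorm _ _
        _ ≤ ‖lam • zs n - dualOp B (zs n)‖ * (‖R‖ * ‖x‖) := by
            refine mul_le_mul_of_nonneg_left ?_ (norm_nonneg _)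
            simpa using R.le_opNorm x
        _ = ‖R‖ * ‖lam • zs n - dualOp B (zs n)‖ * ‖x‖ := by ring
    refine squeeze_zero (fun n => norm_nonneg _) hbound ?_
    simpa using hzs.const_mul ‖R‖
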